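/- On duplicative forests, the reflexive-transitive closure of the duplication relation is antisymmetric, hence a partial order. Moreover, if f rewrites in one step to f', then f' has strictly more black nodes than f. -/
import Mathlib


mutual
  /-- A duplicative tree: a node colored white (`false`) or black (`true`) with a forest of children. -/
  inductive DTree : Type
    | node : Bool → DForest → DTree
  /-- A duplicative forest: a finite sequence of duplicative trees. -/
  inductive DForest : Type
    | nil : DForest
    | cons : DTree → DForest → DForest
end

def DForest.append : DForest → DForest → DForest
  | .nil, g => g
  | .cons t f, g => .cons t (f.append g)

mutual
  /-- One duplication step inside a tree. -/
  inductive TStep : DTree → DTree → Prop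
    | dup (c : DForest) : TStep (.node false c) (.node true (c.append c))
    | congr (b : Bool) {c c' : DForest} : FStep c c' → TStep (.node b c) (.node b c')
  /-- One duplication step inside a forest. -/
  inductive FStep : DForest → DForest → Prop
    | head {t t' : DTree} (f : DForest) : TStep t t' → FStep (.cons t f) (.cons t' f)
    | tail (t : DTree) {f f' : DForest} : FStep f f' → FStep (.cons t f) (.cons t f')
end

/-- Duplication order on forests. -/
def FLe : DForest → DForest → Prop := Relation.ReflTransGen FStep

mutual
  /-- Number of black nodes of a tree. -/
  def DTree.black : DTree → ℕ
    | .node b c => (cond b 1 0) + DForest.black c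
  /-- Number of black nodes of a forest. -/
  def DForest.black : DForest → ℕ
    | .nil => 0
    | .cons t f => DTree.black t + DForest.black f
end


lemma DForest.black_append (f g : DForest) :
    (f.append g).black = f.black + g.black := by
  match f with
  | .nil => simp [DForest.append, DForest.black]
  | .cons t f =>
      simp [DForest.append, DForest.black, DForest.black_append f g]
      ring

mutual
  lemma TStep.black_lt {t t' : DTree} (h : TStep t t') : t.black < t'.black := by
    cases h with
    | dup c =>
        simp [DTree.black, DForest.black_append]
        omega
    | congr b h =>
        have := h.black_lt
        simp [DTree.black]
        omega
  lemma FStep.black_lt {f f' : DForest} (h : FStep f f') : f.black < f'.black := by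
    cases h with
    | head g h =>
        have := h.black_lt
        simp [DForest.black]
        omega
    | tail t h =>
        have := h.black_lt
        simp [DForest.black]
        omega
end

lemma FLe.black_le {f f' : DForest} (h : FLe f f') : f = f' ∨ f.black < f'.black := by
  induction h with
  | refl => exact Or.inl rfl
  | tail _ hstep ih =>
      right
      have h2 := hstep.black_lt
      rcases ih with rfl | h1
      · exact h2
      · omega

/-- The duplication order on duplicative forests is antisymmetric (hence a partial order),
and each one-step duplication strictly increases the number of black nodes. -/
theorem duplication_partial_order :
    (∀ f f' : DForest, FLe f f' → FLe f' f → f = f') ∧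
    (∀ f f' : DForest, FStep f f' → DForest.black f < DForest.black f') := by
  constructor
  · intro f f' h1 h2
    rcases h1.black_le with rfl | l1
    · rfl
    rcases h2.black_le with rfl | l2
    · rfl
    omega
  · intro f f' h
    exact h.black_lt
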